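/- For n ∈ ℕ, the number of distinct commutative nilpotent semigroups of degree 3 on the set {1,2,…,n} equals Σ_{m=2}^{c(n)} C(n,m) · m · Σ_{i=0}^{m-1} (−1)^i C(m−1,i) (m−i)^{(n−m)(n−m+1)/2}, where c(n) = ⌊n + 3/2 − √(2n + 1/4)⌋. -/

import Mathlib

set_option maxHeartbeats 1600000

open Finset

/-- inclusion-exclusion: number of functions from X into A hitting all of S. -/
lemma IE {X α : Type*} [Fintype X] [DecidableEq X] [Fintype α] [DecidableEq α]
    (A S : Finset α) (hSA : S ⊆ A)
    [DecidablePred (fun g : X → α => (∀ x, g x ∈ A) ∧ ∀ s ∈ S, ∃ x, g x = s)] :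
    ((Finset.univ.filter (fun g : X → α =>
        (∀ x, g x ∈ A) ∧ ∀ s ∈ S, ∃ x, g x = s)).card : ℤ) =
    ∑ i ∈ Finset.range (S.card + 1),
      (-1 : ℤ) ^ i * (S.card.choose i : ℤ) * ((A.card : ℤ) - i) ^ (Fintype.card X) := by
  classical
  have hcount : ∀ B : Finset α,
      ((Finset.univ.filter (fun g : X → α => ∀ x, g x ∈ B)).card : ℤ)
        = (B.card : ℤ) ^ (Fintype.card X) := by
    intro B
    have : (Finset.univ.filter (fun g : X → α => ∀ x, g x ∈ B)).card
        = Fintype.card {g : X → α // ∀ x, g x ∈ B} := (Fintype.card_subtype _).symm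
    rw [this, Fintype.card_congr (Equiv.subtypePiEquivPi (p := fun _ y => y ∈ B)),
      Fintype.card_pi]
    push_cast
    simp [Fintype.card_coe]
  -- key pointwise identity
  have key : ∀ g : X → α,
      (if (∀ s ∈ S, ∃ x, g x = s) then (1 : ℤ) else 0)
        = ∑ T ∈ S.powerset, (if (∀ x, g x ∉ T) then (-1 : ℤ) ^ T.card else 0) := by
    intro g
    rw [← Finset.sum_filter]
    have hfil : S.powerset.filter (fun T => ∀ x, g x ∉ T)
        = (S \ Finset.univ.image g).powerset := by
      ext T
      simp only [mem_filter, mem_powerset]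
      constructor
      · rintro ⟨h1, h2⟩
        intro a ha
        refine Finset.mem_sdiff.mpr ⟨h1 ha, fun hmem => ?_⟩
        obtain ⟨x, -, hx⟩ := Finset.mem_image.mp hmem
        exact h2 x (hx ▸ ha)
      · intro h
        refine ⟨fun a ha => (Finset.mem_sdiff.mp (h ha)).1, fun x hx =>
          (Finset.mem_sdiff.mp (h hx)).2 (Finset.mem_image.mpr ⟨x, Finset.mem_univ x, rfl⟩)⟩
    rw [hfil, Finset.sum_powerset_neg_one_pow_card]
    congr 1
    rw [eq_iff_iff, Finset.sdiff_eq_empty_iff_subset]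
    constructor
    · intro h s hs
      obtain ⟨x, hx⟩ := h s hs
      exact Finset.mem_image.mpr ⟨x, Finset.mem_univ x, hx⟩
    · intro h s hs
      obtain ⟨x, -, hx⟩ := Finset.mem_image.mp (h hs)
      exact ⟨x, hx⟩
  -- now compute
  have step1 : ((Finset.univ.filter (fun g : X → α =>
        (∀ x, g x ∈ A) ∧ ∀ s ∈ S, ∃ x, g x = s)).card : ℤ)
      = ∑ g ∈ Finset.univ.filter (fun g : X → α => ∀ x, g x ∈ A),
          (if (∀ s ∈ S, ∃ x, g x = s) then (1 : ℤ) else 0) := by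
    rw [← Finset.sum_filter, Finset.sum_const, Finset.filter_filter]
    simp only [nsmul_eq_mul, mul_one, Nat.cast_inj]
    congr 1
    congr
  rw [step1]
  simp_rw [key]
  rw [Finset.sum_comm]
  have step2 : ∀ T ∈ S.powerset,
      (∑ g ∈ Finset.univ.filter (fun g : X → α => ∀ x, g x ∈ A),
        (if (∀ x, g x ∉ T) then (-1 : ℤ) ^ T.card else 0))
      = (-1 : ℤ) ^ T.card * ((A.card : ℤ) - T.card) ^ (Fintype.card X) := by
    intro T hT
    have hTS : T ⊆ S := Finset.mem_powerset.mp hT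
    have hTA : T ⊆ A := hTS.trans hSA
    rw [← Finset.sum_filter, Finset.sum_const, Finset.filter_filter]
    have : Finset.univ.filter (fun g : X → α => (∀ x, g x ∈ A) ∧ ∀ x, g x ∉ T)
        = Finset.univ.filter (fun g : X → α => ∀ x, g x ∈ A \ T) := by
      ext g
      simp only [Finset.mem_filter, Finset.mem_sdiff]
      exact ⟨fun ⟨h, h1, h2⟩ => ⟨h, fun x => ⟨h1 x, h2 x⟩⟩,
        fun ⟨h, h1⟩ => ⟨h, fun x => (h1 x).1, fun x => (h1 x).2⟩⟩
    rw [this]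
    have := hcount (A \ T)
    rw [Finset.card_sdiff_of_subset hTA] at this
    rw [nsmul_eq_mul, this, mul_comm]
    congr 1
    have := Finset.card_le_card hTA
    push_cast [Nat.cast_sub this]
    ring_nf
  rw [Finset.sum_congr rfl step2, Finset.sum_powerset_apply_card
    (f := fun j => (-1 : ℤ) ^ j * ((A.card : ℤ) - j) ^ (Fintype.card X))]
  apply Finset.sum_congr rfl
  intro j hj
  rw [nsmul_eq_mul]
  ring

lemma inner_vanish (K m : ℕ) (hm : 2 ≤ m) (hK : K < m - 1) :
    ∑ i ∈ Finset.range m, (-1:ℤ)^i * ((m-1).choose i : ℤ) * ((m:ℤ) - (i:ℤ))^K = 0 := by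
  classical
  have hm0 : 0 < m := by omega
  have hm1 : m - 1 + 1 = m := by omega
  have z0 : Fin m := ⟨0, hm0⟩
  have hIE := IE (X := Fin K) (α := Fin m) Finset.univ (Finset.univ.erase z0)
    (Finset.erase_subset _ _)
  have hcards : (Finset.univ.erase z0).card = m - 1 := by
    rw [Finset.card_erase_of_mem (Finset.mem_univ _), Finset.card_univ, Fintype.card_fin]
  rw [hcards, hm1, Finset.card_univ, Fintype.card_fin, Fintype.card_fin] at hIE
  have hnone : ∀ g : Fin K → Fin m, g ∈ (Finset.univ : Finset (Fin K → Fin m)) →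
      ¬((∀ x, g x ∈ (Finset.univ : Finset (Fin m))) ∧
        ∀ s ∈ Finset.univ.erase z0, ∃ x, g x = s) := by
    rintro g - ⟨-, hcov⟩
    have hsub : Finset.univ.erase z0 ⊆ Finset.univ.image g := by
      intro s hs
      obtain ⟨x, hx⟩ := hcov s hs
      exact Finset.mem_image.mpr ⟨x, Finset.mem_univ x, hx⟩
    have h1 := Finset.card_le_card hsub
    rw [hcards] at h1
    have h2 : (Finset.univ.image g).card ≤ K := by
      calc (Finset.univ.image g).card ≤ (Finset.univ : Finset (Fin K)).card :=
            Finset.card_image_le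
        _ = K := by rw [Finset.card_univ, Fintype.card_fin]
    exact lt_irrefl _ ((h1.trans h2).trans_lt hK)
  rw [Finset.filter_false_of_mem hnone] at hIE
  simpa using hIE.symm

lemma pairs_card {n : ℕ} (B : Finset (Fin n)) :
    ((B ×ˢ B).filter (fun p => p.1 ≤ p.2)).card = B.card * (B.card + 1) / 2 := by
  classical
  set t := (B ×ˢ B).filter (fun p => p.1 ≤ p.2) with ht
  set t' := (B ×ˢ B).filter (fun p => p.2 ≤ p.1) with ht'
  have hcard : t.card = t'.card := by
    apply Finset.card_bij (fun p _ => Prod.swap p)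
    · rintro ⟨a, b⟩ hp
      simp only [ht, ht', Finset.mem_filter, Finset.mem_product] at hp ⊢
      exact ⟨⟨hp.1.2, hp.1.1⟩, hp.2⟩
    · rintro ⟨a, b⟩ - ⟨c, d⟩ - h
      simpa [Prod.ext_iff, and_comm] using h
    · rintro ⟨a, b⟩ hp
      refine ⟨(b, a), ?_, rfl⟩
      simp only [ht, ht', Finset.mem_filter, Finset.mem_product] at hp ⊢
      exact ⟨⟨hp.1.2, hp.1.1⟩, hp.2⟩
  have hunion : t ∪ t' = B ×ˢ B := by
    rw [ht, ht', ← Finset.filter_or]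
    rw [Finset.filter_true_of_mem]
    intro p _
    exact le_total p.1 p.2
  have hinter : (t ∩ t').card = B.card := by
    rw [ht, ht', ← Finset.filter_and]
    apply Finset.card_bij (fun p _ => p.1)
    · rintro ⟨a, b⟩ hp
      simp only [Finset.mem_filter, Finset.mem_product] at hp
      exact hp.1.1
    · rintro ⟨a, b⟩ hab ⟨c, d⟩ hcd h
      simp only [Finset.mem_filter, Finset.mem_product] at hab hcd
      have h1 : a = b := le_antisymm hab.2.1 hab.2.2
      have h2 : c = d := le_antisymm hcd.2.1 hcd.2.2
      simp_all [Prod.ext_iff]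
    · intro a ha
      refine ⟨(a, a), ?_, rfl⟩
      simp only [Finset.mem_filter, Finset.mem_product]
      exact ⟨⟨ha, ha⟩, le_refl a, le_refl a⟩
  have key := Finset.card_union_add_card_inter t t'
  rw [hunion, Finset.card_product, hinter, ← hcard] at key
  have hring : B.card * (B.card + 1) = B.card * B.card + B.card := by ring
  omega

lemma c_le (n : ℕ) (hn : 1 ≤ n) :
    ⌊(n : ℝ) + 3/2 - Real.sqrt (2 * (n : ℝ) + 1/4)⌋₊ ≤ n := by
  by_contra h
  push_neg at h
  set x := (n : ℝ) + 3/2 - Real.sqrt (2 * (n : ℝ) + 1/4) with hx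
  rcases le_or_gt 0 x with h0 | h0
  · have : ((n + 1 : ℕ) : ℝ) ≤ x := (Nat.le_floor_iff h0).mp h
    have hs : Real.sqrt (2 * (n : ℝ) + 1/4) ≤ 1/2 := by
      push_cast at this
      rw [hx] at this
      linarith
    have h1 : 2 * (n : ℝ) + 1/4 ≤ 1/4 := by
      have := Real.sq_sqrt (by positivity : (0:ℝ) ≤ 2 * (n : ℝ) + 1/4)
      nlinarith [Real.sqrt_nonneg (2 * (n : ℝ) + 1/4)]
    have : (n : ℝ) ≥ 1 := by exact_mod_cast hn
    linarith
  · rw [Nat.floor_of_nonpos h0.le] at h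
    omega

lemma le_c (n m : ℕ) (hm2 : 2 ≤ m) (hmn : m ≤ n)
    (h : m - 1 ≤ (n - m) * (n - m + 1) / 2) :
    m ≤ ⌊(n : ℝ) + 3/2 - Real.sqrt (2 * (n : ℝ) + 1/4)⌋₊ := by
  set k := n - m with hk
  have hnk : n = m + k := by omega
  have h2 : 2 * (m - 1) ≤ k * (k + 1) := by omega
  have hs : Real.sqrt (2 * (n : ℝ) + 1/4) ≤ (k : ℝ) + 3/2 := by
    rw [show (k : ℝ) + 3/2 = Real.sqrt (((k:ℝ) + 3/2)^2) from
      (Real.sqrt_sq (by positivity)).symm]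
    apply Real.sqrt_le_sqrt
    have hn' : (n : ℝ) = (m : ℝ) + (k : ℝ) := by exact_mod_cast hnk
    have hm' : 2 * ((m : ℝ) - 1) ≤ (k : ℝ) * ((k : ℝ) + 1) := by
      have h3 : ((2 * (m - 1) : ℕ) : ℝ) ≤ ((k * (k + 1) : ℕ) : ℝ) := by exact_mod_cast h2
      rw [Nat.cast_mul, Nat.cast_sub (by omega : 1 ≤ m)] at h3
      push_cast at h3
      linarith
    nlinarith
  apply Nat.le_floor
  have : ((m:ℝ)) = (n : ℝ) - (k : ℝ) := by
    have : (n : ℝ) = (m : ℝ) + (k : ℝ) := by exact_mod_cast hnk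
    linarith
  rw [this]
  linarith

lemma fiber_card_eq {n : ℕ} (x0 : Fin n) (A : Finset (Fin n)) (z : Fin n)
    (hz : z ∈ A) (hA : 2 ≤ A.card)
    [DecidablePred (fun f : Fin n → Fin n → Fin n =>
        (∀ x y w, f (f x y) w = f x (f y w)) ∧
        (∀ x y, f x y = f y x) ∧
        ∃ z' : Fin n, (∀ t, f z' t = z' ∧ f t z' = z') ∧
          (∀ x y w, f (f x y) w = z') ∧ (∃ x y, f x y ≠ z'))]
    [DecidablePred (fun f : Fin n → Fin n → Fin n =>
        ((Finset.univ ×ˢ Finset.univ).image (fun p => f p.1 p.2), f (f x0 x0) x0) = (A, z))]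
    [DecidablePred (fun g : {p : Fin n × Fin n // (p.1 ∉ A ∧ p.2 ∉ A) ∧ p.1 ≤ p.2} → Fin n =>
        (∀ p, g p ∈ A) ∧ ∀ s ∈ A.erase z, ∃ p, g p = s)] :
    ((Finset.univ.filter (fun f : Fin n → Fin n → Fin n =>
        (∀ x y w, f (f x y) w = f x (f y w)) ∧
        (∀ x y, f x y = f y x) ∧
        ∃ z' : Fin n, (∀ t, f z' t = z' ∧ f t z' = z') ∧
          (∀ x y w, f (f x y) w = z') ∧ (∃ x y, f x y ≠ z'))).filter
      (fun f => ((Finset.univ ×ˢ Finset.univ).image (fun p => f p.1 p.2), f (f x0 x0) x0)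
          = (A, z))).card
    = (Finset.univ.filter
        (fun g : {p : Fin n × Fin n // (p.1 ∉ A ∧ p.2 ∉ A) ∧ p.1 ≤ p.2} → Fin n =>
        (∀ p, g p ∈ A) ∧ ∀ s ∈ A.erase z, ∃ p, g p = s)).card := by
  classical
  apply Finset.card_nbij'
    (i := fun f => fun p : {p : Fin n × Fin n // (p.1 ∉ A ∧ p.2 ∉ A) ∧ p.1 ≤ p.2} =>
      f p.1.1 p.1.2)
    (j := fun g => fun x y =>
      if h : (x ∉ A ∧ y ∉ A) then
        g ⟨(min x y, max x y), ⟨⟨by rcases min_choice x y with h' | h' <;> rw [h'] <;>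
            [exact h.1; exact h.2], by rcases max_choice x y with h' | h' <;> rw [h'] <;>
            [exact h.1; exact h.2]⟩, min_le_max⟩⟩
      else z)
  -- hi : i maps into target
  · intro f hf
    obtain ⟨hf1, hf2⟩ := Finset.mem_filter.mp hf
    obtain ⟨-, hassoc, hcomm, z', hz', htrip, hnz⟩ := Finset.mem_filter.mp hf1
    rw [Prod.mk.injEq] at hf2
    obtain ⟨himg, hzd⟩ := hf2
    have hz'z : z' = z := by rw [← hzd, htrip x0 x0 x0]
    rw [hz'z] at hz' htrip
    have hmem : ∀ x y, f x y ∈ A := by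
      intro x y
      rw [← himg]
      exact Finset.mem_image.mpr ⟨(x, y), by simp, rfl⟩
    have hann : ∀ a ∈ A, ∀ t, f a t = z := by
      intro a ha t
      rw [← himg] at ha
      obtain ⟨⟨u, v⟩, -, huv⟩ := Finset.mem_image.mp ha
      rw [← huv]
      exact htrip u v t
    refine Finset.mem_filter.mpr ⟨Finset.mem_univ _, fun p => hmem _ _, ?_⟩
    intro s hs
    obtain ⟨hsne, hsA⟩ := Finset.mem_erase.mp hs
    rw [← himg] at hsA
    obtain ⟨⟨x, y⟩, -, hxy⟩ := Finset.mem_image.mp hsA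
    have hxB : x ∉ A := fun hxA => hsne (by rw [← hxy, hann x hxA])
    have hyB : y ∉ A := fun hyA => hsne (by rw [← hxy, hcomm, hann y hyA])
    rcases le_total x y with hle | hle
    · exact ⟨⟨(x, y), ⟨⟨hxB, hyB⟩, hle⟩⟩, hxy⟩
    · exact ⟨⟨(y, x), ⟨⟨hyB, hxB⟩, hle⟩⟩, (hcomm y x).trans hxy⟩
  -- hj : j maps into source
  · intro g hg
    beta_reduce
    obtain ⟨-, gvals, gcov⟩ := Finset.mem_filter.mp hg
    set F : Fin n → Fin n → Fin n := fun x y =>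
      if h : (x ∉ A ∧ y ∉ A) then
        g ⟨(min x y, max x y), ⟨⟨by rcases min_choice x y with h' | h' <;> rw [h'] <;>
            [exact h.1; exact h.2], by rcases max_choice x y with h' | h' <;> rw [h'] <;>
            [exact h.1; exact h.2]⟩, min_le_max⟩⟩
      else z with hF
    have hFA : ∀ x y, F x y ∈ A := by
      intro x y
      rw [hF]
      dsimp only
      split
      · exact gvals _
      · exact hz
    have hFz1 : ∀ a, a ∈ A → ∀ t, F a t = z := by
      intro a ha t
      rw [hF]
      dsimp only
      rw [dif_neg]
      tauto
    have hFz2 : ∀ a, a ∈ A → ∀ t, F t a = z := by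
      intro a ha t
      rw [hF]
      dsimp only
      rw [dif_neg]
      tauto
    have hcov' : ∀ s ∈ A.erase z, ∃ x y, (x ∉ A ∧ y ∉ A) ∧ F x y = s := by
      intro s hs
      obtain ⟨⟨⟨x, y⟩, ⟨⟨h1, h2⟩, h3⟩⟩, hp⟩ := gcov s hs
      refine ⟨x, y, ⟨h1, h2⟩, ?_⟩
      rw [hF]
      dsimp only
      rw [dif_pos ⟨h1, h2⟩]
      rw [← hp]
      congr 1
      exact Subtype.ext (Prod.ext (min_eq_left h3) (max_eq_right h3))
    refine Finset.mem_filter.mpr ⟨Finset.mem_filter.mpr ⟨Finset.mem_univ _, ?_, ?_, ?_⟩, ?_⟩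
    · -- associativity
      intro x y w
      rw [hFz1 _ (hFA x y) w, hFz2 _ (hFA y w) x]
    · -- commutativity
      intro x y
      rw [hF]
      dsimp only
      by_cases h : x ∉ A ∧ y ∉ A
      · rw [dif_pos h, dif_pos (⟨h.2, h.1⟩ : y ∉ A ∧ x ∉ A)]
        congr 1
        exact Subtype.ext (Prod.ext (min_comm x y) (max_comm x y))
      · rw [dif_neg h, dif_neg (fun hh => h ⟨hh.2, hh.1⟩)]
    · -- existence of zero etc.
      refine ⟨z, fun t => ⟨hFz1 z hz t, hFz2 z hz t⟩, fun x y w => hFz1 _ (hFA x y) w, ?_⟩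
      obtain ⟨a, ha, hane⟩ := Finset.exists_mem_ne (lt_of_lt_of_le one_lt_two hA) z
      obtain ⟨x, y, -, hxy⟩ := hcov' a (Finset.mem_erase.mpr ⟨hane, ha⟩)
      exact ⟨x, y, by rw [hxy]; exact hane⟩
    · -- φ value
      rw [Prod.mk.injEq]
      constructor
      · apply Finset.Subset.antisymm
        · intro a ha
          obtain ⟨⟨x, y⟩, -, hxy⟩ := Finset.mem_image.mp ha
          rw [← hxy]
          exact hFA x y
        · intro a ha
          by_cases haz : a = z
          · subst haz
            exact Finset.mem_image.mpr ⟨(a, a), by simp, hFz1 a ha a⟩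
          · obtain ⟨x, y, -, hxy⟩ := hcov' a (Finset.mem_erase.mpr ⟨haz, ha⟩)
            exact Finset.mem_image.mpr ⟨(x, y), by simp, hxy⟩
      · exact hFz1 _ (hFA x0 x0) x0
  -- left inverse
  · intro f hf
    obtain ⟨hf1, hf2⟩ := Finset.mem_filter.mp hf
    obtain ⟨-, hassoc, hcomm, z', hz', htrip, hnz⟩ := Finset.mem_filter.mp hf1
    rw [Prod.mk.injEq] at hf2
    obtain ⟨himg, hzd⟩ := hf2
    have hz'z : z' = z := by rw [← hzd, htrip x0 x0 x0]
    rw [hz'z] at hz' htrip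
    have hann : ∀ a ∈ A, ∀ t, f a t = z := by
      intro a ha t
      rw [← himg] at ha
      obtain ⟨⟨u, v⟩, -, huv⟩ := Finset.mem_image.mp ha
      rw [← huv]
      exact htrip u v t
    funext x y
    dsimp only
    by_cases h : x ∉ A ∧ y ∉ A
    · rw [dif_pos h]
      rcases le_total x y with hle | hle
      · rw [min_eq_left hle, max_eq_right hle]
      · rw [min_eq_right hle, max_eq_left hle, hcomm]
    · rw [dif_neg h]
      by_cases hx : x ∈ A
      · exact (hann x hx y).symm
      · have hy : y ∈ A := by tauto
        rw [hcomm]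
        exact (hann y hy x).symm
  -- right inverse
  · intro g hg
    funext p
    obtain ⟨⟨x, y⟩, ⟨⟨h1, h2⟩, h3⟩⟩ := p
    dsimp only
    rw [dif_pos ⟨h1, h2⟩]
    congr 1
    exact Subtype.ext (Prod.ext (min_eq_left h3) (max_eq_right h3))


/-- The number of distinct commutative nilpotent semigroups of degree 3 on {1,…,n}. -/
theorem stmt6 (n : ℕ) :
    (Nat.card {f : Fin n → Fin n → Fin n //
        (∀ x y w, f (f x y) w = f x (f y w)) ∧
        (∀ x y, f x y = f y x) ∧
        ∃ z : Fin n, (∀ t, f z t = z ∧ f t z = z) ∧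
          (∀ x y w, f (f x y) w = z) ∧ (∃ x y, f x y ≠ z)} : ℤ) =
    ∑ m ∈ Finset.Icc 2 (⌊(n : ℝ) + 3/2 - Real.sqrt (2 * (n : ℝ) + 1/4)⌋₊),
      (n.choose m : ℤ) * m *
        ∑ i ∈ Finset.range m,
          (-1 : ℤ) ^ i * ((m - 1).choose i : ℤ) *
            ((m : ℤ) - (i : ℤ)) ^ ((n - m) * (n - m + 1) / 2) := by
  classical
  rcases Nat.eq_zero_or_pos n with hn | hn
  · -- n = 0
    subst hn
    have he : IsEmpty {f : Fin 0 → Fin 0 → Fin 0 //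
        (∀ x y w, f (f x y) w = f x (f y w)) ∧
        (∀ x y, f x y = f y x) ∧
        ∃ z : Fin 0, (∀ t, f z t = z ∧ f t z = z) ∧
          (∀ x y w, f (f x y) w = z) ∧ (∃ x y, f x y ≠ z)} := by
      constructor
      rintro ⟨f, -, -, z, -⟩
      exact z.elim0
    rw [Nat.card_of_isEmpty]
    have hs : Real.sqrt (2 * ((0:ℕ) : ℝ) + 1/4) = 1/2 := by
      rw [show 2 * ((0:ℕ) : ℝ) + 1/4 = (1/2)^2 by norm_num, Real.sqrt_sq (by norm_num)]
    have hfl : ⌊((0:ℕ) : ℝ) + 3/2 - Real.sqrt (2 * ((0:ℕ) : ℝ) + 1/4)⌋₊ = 1 := by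
      rw [hs]
      norm_num
    rw [hfl, Finset.Icc_eq_empty (by norm_num), Finset.sum_empty, Nat.cast_zero]
  · -- n ≥ 1
    have x0 : Fin n := ⟨0, hn⟩
    set c := ⌊(n : ℝ) + 3/2 - Real.sqrt (2 * (n : ℝ) + 1/4)⌋₊ with hc
    clear_value c
    -- step 1 : Nat.card to filter card
    have h1 : Nat.card {f : Fin n → Fin n → Fin n //
        (∀ x y w, f (f x y) w = f x (f y w)) ∧
        (∀ x y, f x y = f y x) ∧
        ∃ z : Fin n, (∀ t, f z t = z ∧ f t z = z) ∧
          (∀ x y w, f (f x y) w = z) ∧ (∃ x y, f x y ≠ z)}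
        = (Finset.univ.filter (fun f : Fin n → Fin n → Fin n =>
        (∀ x y w, f (f x y) w = f x (f y w)) ∧
        (∀ x y, f x y = f y x) ∧
        ∃ z : Fin n, (∀ t, f z t = z ∧ f t z = z) ∧
          (∀ x y w, f (f x y) w = z) ∧ (∃ x y, f x y ≠ z))).card := by
      rw [Nat.card_eq_fintype_card, Fintype.card_subtype]
    -- step 2 : fiberwise
    set T : Finset (Finset (Fin n) × Fin n) :=
      Finset.univ.filter (fun az => az.2 ∈ az.1 ∧ 2 ≤ az.1.card) with hT
    have h2 : (Finset.univ.filter (fun f : Fin n → Fin n → Fin n =>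
        (∀ x y w, f (f x y) w = f x (f y w)) ∧
        (∀ x y, f x y = f y x) ∧
        ∃ z : Fin n, (∀ t, f z t = z ∧ f t z = z) ∧
          (∀ x y w, f (f x y) w = z) ∧ (∃ x y, f x y ≠ z))).card
        = ∑ az ∈ T, ((Finset.univ.filter (fun f : Fin n → Fin n → Fin n =>
            (∀ x y w, f (f x y) w = f x (f y w)) ∧
            (∀ x y, f x y = f y x) ∧
            ∃ z : Fin n, (∀ t, f z t = z ∧ f t z = z) ∧
              (∀ x y w, f (f x y) w = z) ∧ (∃ x y, f x y ≠ z))).filter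
          (fun f => ((Finset.univ ×ˢ Finset.univ).image (fun p => f p.1 p.2),
              f (f x0 x0) x0) = az)).card := by
      apply Finset.card_eq_sum_card_fiberwise
      intro f hf
      obtain ⟨-, hassoc, hcomm, z', hz', htrip, hnz⟩ := Finset.mem_filter.mp hf
      beta_reduce
      rw [hT, Finset.mem_coe, Finset.mem_filter]
      refine ⟨Finset.mem_univ _, ?_, ?_⟩
      · -- z value is in the image
        have : f (f x0 x0) x0 = z' := htrip x0 x0 x0
        rw [this]
        exact Finset.mem_image.mpr ⟨(z', z'), by simp, (hz' z').1⟩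
      · obtain ⟨x, y, hxy⟩ := hnz
        have hxymem : f x y ∈ (Finset.univ ×ˢ Finset.univ).image
            (fun p : Fin n × Fin n => f p.1 p.2) :=
          Finset.mem_image.mpr ⟨(x, y), by simp, rfl⟩
        have hzmem : z' ∈ (Finset.univ ×ˢ Finset.univ).image
            (fun p : Fin n × Fin n => f p.1 p.2) :=
          Finset.mem_image.mpr ⟨(z', z'), by simp, (hz' z').1⟩
        exact Finset.one_lt_card.mpr ⟨f x y, hxymem, z', hzmem, hxy⟩
    -- step 3 : compute each fiber
    have h3 : ∀ az ∈ T, (((Finset.univ.filter (fun f : Fin n → Fin n → Fin n =>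
            (∀ x y w, f (f x y) w = f x (f y w)) ∧
            (∀ x y, f x y = f y x) ∧
            ∃ z : Fin n, (∀ t, f z t = z ∧ f t z = z) ∧
              (∀ x y w, f (f x y) w = z) ∧ (∃ x y, f x y ≠ z))).filter
          (fun f => ((Finset.univ ×ˢ Finset.univ).image (fun p => f p.1 p.2),
              f (f x0 x0) x0) = az)).card : ℤ)
        = ∑ i ∈ Finset.range az.1.card,
            (-1 : ℤ) ^ i * ((az.1.card - 1).choose i : ℤ) *
              ((az.1.card : ℤ) - (i : ℤ)) ^
                ((n - az.1.card) * (n - az.1.card + 1) / 2) := by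
      rintro ⟨A, z⟩ haz
      rw [hT, Finset.mem_filter] at haz
      obtain ⟨-, hz, hA⟩ := haz
      dsimp only at hz hA ⊢
      rw [fiber_card_eq x0 A z hz hA]
      rw [IE (X := {p : Fin n × Fin n // (p.1 ∉ A ∧ p.2 ∉ A) ∧ p.1 ≤ p.2})
        A (A.erase z) (Finset.erase_subset _ _)]
      have hXcard : Fintype.card {p : Fin n × Fin n // (p.1 ∉ A ∧ p.2 ∉ A) ∧ p.1 ≤ p.2}
          = (n - A.card) * (n - A.card + 1) / 2 := by
        rw [Fintype.card_subtype]
        have hfil : Finset.univ.filter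
              (fun p : Fin n × Fin n => (p.1 ∉ A ∧ p.2 ∉ A) ∧ p.1 ≤ p.2)
            = (Aᶜ ×ˢ Aᶜ).filter (fun p => p.1 ≤ p.2) := by
          ext p
          simp [Finset.mem_compl, Finset.mem_product, and_assoc]
        rw [hfil, pairs_card, Finset.card_compl, Fintype.card_fin]
      rw [hXcard, Finset.card_erase_of_mem hz]
      rw [show A.card - 1 + 1 = A.card by clear * - hA; omega]
    rw [h1, h2, Nat.cast_sum, Finset.sum_congr rfl h3]
    -- step 4 : regroup the sum over (A, z) pairs by card
    have h4 : (∑ az ∈ T, ∑ i ∈ Finset.range az.1.card,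
            (-1 : ℤ) ^ i * ((az.1.card - 1).choose i : ℤ) *
              ((az.1.card : ℤ) - (i : ℤ)) ^
                ((n - az.1.card) * (n - az.1.card + 1) / 2))
        = ∑ m ∈ Finset.Icc 2 n, (n.choose m : ℤ) * m *
            ∑ i ∈ Finset.range m,
              (-1 : ℤ) ^ i * ((m - 1).choose i : ℤ) *
                ((m : ℤ) - (i : ℤ)) ^ ((n - m) * (n - m + 1) / 2) := by
      set g : ℕ → ℤ := fun m => ∑ i ∈ Finset.range m,
              (-1 : ℤ) ^ i * ((m - 1).choose i : ℤ) *
                ((m : ℤ) - (i : ℤ)) ^ ((n - m) * (n - m + 1) / 2) with hg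
      rw [hT, Finset.sum_filter, Fintype.sum_prod_type]
      have hinner : ∀ A : Finset (Fin n),
          (∑ z : Fin n, if z ∈ A ∧ 2 ≤ A.card then g A.card else 0)
          = if 2 ≤ A.card then (A.card : ℤ) * g A.card else 0 := by
        intro A
        by_cases hcA : 2 ≤ A.card
        · simp only [hcA, and_true, if_true]
          rw [Finset.sum_ite_mem, Finset.univ_inter, Finset.sum_const, nsmul_eq_mul]
        · simp [hcA]
      rw [Finset.sum_congr rfl (fun A _ => hinner A)]
      -- group by cardinality
      have hmap : ∀ A ∈ (Finset.univ : Finset (Finset (Fin n))),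
          A.card ∈ Finset.range (n + 1) := by
        intro A _
        rw [Finset.mem_range, Nat.lt_succ_iff]
        calc A.card ≤ (Finset.univ : Finset (Fin n)).card := Finset.card_le_card
              (Finset.subset_univ A)
          _ = n := by rw [Finset.card_univ, Fintype.card_fin]
      rw [← Finset.sum_fiberwise_of_maps_to hmap]
      have hfib : ∀ j ∈ Finset.range (n + 1),
          (∑ A ∈ Finset.univ.filter (fun A : Finset (Fin n) => A.card = j),
            if 2 ≤ A.card then (A.card : ℤ) * g A.card else 0)
          = (n.choose j : ℤ) * (if 2 ≤ j then (j : ℤ) * g j else 0) := by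
        intro j _
        have hpc : Finset.univ.filter (fun A : Finset (Fin n) => A.card = j)
            = Finset.powersetCard j Finset.univ := by
          ext A
          simp [Finset.mem_powersetCard]
        rw [hpc]
        rw [Finset.sum_congr rfl (fun A hA => by
          rw [(Finset.mem_powersetCard.mp hA).2])]
        rw [Finset.sum_const, Finset.card_powersetCard, Finset.card_univ,
          Fintype.card_fin, nsmul_eq_mul]
      rw [Finset.sum_congr rfl hfib]
      have hmove : ∀ j ∈ Finset.range (n + 1),
          (n.choose j : ℤ) * (if 2 ≤ j then (j : ℤ) * g j else 0)
          = if 2 ≤ j then (n.choose j : ℤ) * j * g j else 0 := by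
        intro j _
        rw [mul_ite, mul_zero, mul_assoc]
      rw [Finset.sum_congr rfl hmove, ← Finset.sum_filter]
      have hIcc : (Finset.range (n + 1)).filter (fun j => 2 ≤ j) = Finset.Icc 2 n := by
        ext j
        simp only [Finset.mem_filter, Finset.mem_range, Finset.mem_Icc, Nat.lt_succ_iff]
        clear * -
        omega
      rw [hIcc]
    rw [h4]
    -- step 5 : restrict the interval
    have hcn : c ≤ n := hc ▸ c_le n hn
    have hvan : ∀ m ∈ Finset.Icc 2 n, m ∉ Finset.Icc 2 c →
        (n.choose m : ℤ) * m * (∑ i ∈ Finset.range m,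
          (-1 : ℤ) ^ i * ((m - 1).choose i : ℤ) *
            ((m : ℤ) - (i : ℤ)) ^ ((n - m) * (n - m + 1) / 2)) = 0 := by
      intro m hm hmc
      rw [Finset.mem_Icc] at hm
      rw [Finset.mem_Icc, not_and] at hmc
      have hclt : c < m := by
        by_contra hle
        exact (hmc hm.1) (by clear * - hle; omega)
      have hKlt : (n - m) * (n - m + 1) / 2 < m - 1 := by
        by_contra hge
        push_neg at hge
        exact absurd (hc ▸ le_c n m hm.1 hm.2 hge) (by clear * - hclt; omega)
      rw [inner_vanish _ _ hm.1 hKlt, mul_zero]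
    exact (Finset.sum_subset (Finset.Icc_subset_Icc_right hcn) hvan).symm
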